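/- arXiv:1211.1128 — 2 statements merged into one kernel-verified Lean document; each statement's English description precedes it below -/
import Mathlib

section
/- For every s ∈ ℂ^{μ_A−1} and every s_μ ∈ ℂ∖{0}, the set of critical points {x ∈ ℂ^3 : ∂F/∂x_1(x) = ∂F/∂x_2(x) = ∂F/∂x_3(x) = 0} of the polynomial F(x) := F_A(x; s, s_μ) is finite. -/
namespace CuspAux
open Polynomial

lemma finite_of_fibers {α β : Type*} (f : α → β) (s : Set α)
    (h1 : (f '' s).Finite) (h2 : ∀ b ∈ f '' s, {x | x ∈ s ∧ f x = b}.Finite) : s.Finite := by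
  have hsub : s ⊆ ⋃ b ∈ f '' s, {x | x ∈ s ∧ f x = b} := by
    intro x hx
    simp only [Set.mem_iUnion, Set.mem_setOf_eq]
    exact ⟨f x, ⟨x, hx, rfl⟩, hx, rfl⟩
  exact ((h1.biUnion h2).subset hsub)

lemma ne_zero_of_top (A : ℂ) (N : ℕ) (q : ℂ[X]) (hA : A ≠ 0) (hq : q.natDegree < N) :
    C A * X ^ N + q ≠ 0 := by
  intro h
  have h2 := congrArg (fun p => coeff p N) h
  simp [coeff_eq_zero_of_natDegree_lt hq] at h2
  exact hA h2

lemma finrt (A : ℂ) (N : ℕ) (q : ℂ[X]) (hA : A ≠ 0) (hq : q.natDegree < N) :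
    {t : ℂ | A * t ^ N + q.eval t = 0}.Finite := by
  refine (Polynomial.finite_setOf_isRoot (ne_zero_of_top A N q hA hq)).subset ?_
  intro t ht
  simp only [Set.mem_setOf_eq, IsRoot.def, eval_add, eval_mul, eval_pow, eval_C, eval_X]
  exact ht

lemma caseA (w : ℂ) (hw : w ≠ 0) (a1 a2 : ℕ) (ha1 : 1 ≤ a1) (ha12 : a1 ≤ a2)
    (c1 c2 : ℕ → ℂ) :
    {x : Fin 3 → ℂ |
        (1 : ℂ) = w * (x 1 * x 2) ∧
        (a1 : ℂ) * x 1 ^ (a1 - 1) + (∑ j ∈ Finset.Ico 1 a1, c1 j * x 1 ^ (j - 1))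
          = w * (x 2 * x 0) ∧
        (a2 : ℂ) * x 2 ^ (a2 - 1) + (∑ j ∈ Finset.Ico 1 a2, c2 j * x 2 ^ (j - 1))
          = w * (x 0 * x 1)}.Finite := by
  have ha2 : 1 ≤ a2 := le_trans ha1 ha12
  apply finite_of_fibers (fun x => x 1)
  · -- the image of the first coordinate is finite
    set q : ℂ[X] := (∑ j ∈ Finset.Ico 1 a1, C (w ^ a2 * c1 j) * X ^ (a2 + j))
        - C (a2 : ℂ) - ∑ j ∈ Finset.Ico 1 a2, C (c2 j * w ^ (a2 - j)) * X ^ (a2 - j) with hqdef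
    have hqd : q.natDegree < a1 + a2 := by
      have h1 : (∑ j ∈ Finset.Ico 1 a1, C (w ^ a2 * c1 j) * X ^ (a2 + j)).natDegree ≤ a1 + a2 - 1 :=
        natDegree_sum_le_of_forall_le _ _ (fun j hj => (natDegree_C_mul_X_pow_le _ _).trans
          (by rw [Finset.mem_Ico] at hj; omega))
      have h2 : (∑ j ∈ Finset.Ico 1 a2, C (c2 j * w ^ (a2 - j)) * X ^ (a2 - j)).natDegree
          ≤ a1 + a2 - 1 :=
        natDegree_sum_le_of_forall_le _ _ (fun j hj => (natDegree_C_mul_X_pow_le _ _).trans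
          (by rw [Finset.mem_Ico] at hj; omega))
      have h3 := natDegree_sub_le ((∑ j ∈ Finset.Ico 1 a1, C (w ^ a2 * c1 j) * X ^ (a2 + j))
          - C (a2 : ℂ)) (∑ j ∈ Finset.Ico 1 a2, C (c2 j * w ^ (a2 - j)) * X ^ (a2 - j))
      have h4 := natDegree_sub_le (∑ j ∈ Finset.Ico 1 a1, C (w ^ a2 * c1 j) * X ^ (a2 + j))
          (C (a2 : ℂ))
      have h5 : (C (a2 : ℂ)).natDegree = 0 := natDegree_C _
      rw [hqdef]
      omega
    have hA : w ^ a2 * (a1 : ℂ) ≠ 0 :=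
      mul_ne_zero (pow_ne_zero _ hw) (Nat.cast_ne_zero.mpr (by omega))
    refine ((finrt (w ^ a2 * a1) (a1 + a2) q hA hqd).subset ?_)
    rintro y ⟨x, hx, rfl⟩
    obtain ⟨h0, h1, h2⟩ := hx
    simp only [Set.mem_setOf_eq]
    have hprod : w * x 1 * x 2 = 1 := by linear_combination -h0
    have hevalq : q.eval (x 1) = (∑ j ∈ Finset.Ico 1 a1, w ^ a2 * c1 j * x 1 ^ (a2 + j))
        - a2 - ∑ j ∈ Finset.Ico 1 a2, c2 j * w ^ (a2 - j) * x 1 ^ (a2 - j) := by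
      simp [hqdef, eval_finset_sum]
    rw [hevalq]
    have E1' : w ^ a2 * a1 * x 1 ^ (a1 + a2)
          + ∑ j ∈ Finset.Ico 1 a1, w ^ a2 * c1 j * x 1 ^ (a2 + j)
        = w ^ a2 * x 1 ^ (a2 + 1)
          * ((a1 : ℂ) * x 1 ^ (a1 - 1) + ∑ j ∈ Finset.Ico 1 a1, c1 j * x 1 ^ (j - 1)) := by
      rw [mul_add, Finset.mul_sum]
      congr 1
      · rw [show a1 + a2 = (a2 + 1) + (a1 - 1) by omega, pow_add]; ring
      · refine Finset.sum_congr rfl fun j hj => ?_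
        rw [Finset.mem_Ico] at hj
        rw [show a2 + j = (a2 + 1) + (j - 1) by omega, pow_add]; ring
    have E2' : (a2 : ℂ) + ∑ j ∈ Finset.Ico 1 a2, c2 j * w ^ (a2 - j) * x 1 ^ (a2 - j)
        = (w * x 1) ^ (a2 - 1)
          * ((a2 : ℂ) * x 2 ^ (a2 - 1) + ∑ j ∈ Finset.Ico 1 a2, c2 j * x 2 ^ (j - 1)) := by
      rw [mul_add, Finset.mul_sum]
      congr 1
      · have key : (w * x 1) ^ (a2 - 1) * ((a2 : ℂ) * x 2 ^ (a2 - 1))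
            = (a2 : ℂ) * (w * x 1 * x 2) ^ (a2 - 1) := by
          rw [mul_pow (w * x 1) (x 2)]; ring
        rw [key, hprod, one_pow, mul_one]
      · refine Finset.sum_congr rfl fun j hj => ?_
        rw [Finset.mem_Ico] at hj
        have h6 : (w * x 1) ^ (a2 - 1) = (w * x 1) ^ (a2 - j) * (w * x 1) ^ (j - 1) := by
          rw [← pow_add]; congr 1; omega
        have h7 : (w * x 1) ^ (j - 1) * x 2 ^ (j - 1) = 1 := by
          rw [← mul_pow, hprod, one_pow]
        have key : (w * x 1) ^ (a2 - 1) * (c2 j * x 2 ^ (j - 1))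
            = c2 j * ((w ^ (a2 - j) * x 1 ^ (a2 - j)) * ((w * x 1) ^ (j - 1) * x 2 ^ (j - 1))) := by
          rw [h6, mul_pow]; ring
        rw [key, h7, mul_one]; ring
    have E3' : (w * x 1) ^ (a2 - 1) * (w * x 1 ^ 2) = w ^ a2 * x 1 ^ (a2 + 1) := by
      rw [mul_pow, show w ^ a2 = w ^ (a2 - 1) * w by rw [← pow_succ]; congr 1; omega,
        show x 1 ^ (a2 + 1) = x 1 ^ (a2 - 1) * x 1 ^ 2 by rw [← pow_add]; congr 1; omega]
      ring
    have hu : x 0 = x 1 * ((a1 : ℂ) * x 1 ^ (a1 - 1)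
        + ∑ j ∈ Finset.Ico 1 a1, c1 j * x 1 ^ (j - 1)) := by
      linear_combination (-(x 1)) * h1 - (x 0) * hprod
    linear_combination E1' - E2'
      - ((a1 : ℂ) * x 1 ^ (a1 - 1) + ∑ j ∈ Finset.Ico 1 a1, c1 j * x 1 ^ (j - 1)) * E3'
      - (w * x 1) ^ (a2 - 1) * h2 - (w * x 1 * (w * x 1) ^ (a2 - 1)) * hu
  · -- fibers are subsingletons
    intro b _
    apply Set.Subsingleton.finite
    rintro x ⟨hx, hb1⟩ x' ⟨hx', hb1'⟩
    obtain ⟨h0, h1, h2⟩ := hx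
    obtain ⟨h0', h1', h2'⟩ := hx'
    have hx1 : x 1 = x' 1 := by rw [hb1, hb1']
    have hy : x 1 ≠ 0 := by intro h; rw [h] at h0; simp at h0
    have hprod : w * x 1 * x 2 = 1 := by linear_combination -h0
    have hprod' : w * x' 1 * x' 2 = 1 := by linear_combination -h0'
    have hz : x 2 = x' 2 := by
      apply mul_left_cancel₀ (mul_ne_zero hw hy)
      calc w * x 1 * x 2 = 1 := hprod
      _ = w * x' 1 * x' 2 := hprod'.symm
      _ = w * x 1 * x' 2 := by rw [← hx1]
    have hu : x 0 = x 1 * ((a1 : ℂ) * x 1 ^ (a1 - 1)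
        + ∑ j ∈ Finset.Ico 1 a1, c1 j * x 1 ^ (j - 1)) := by
      linear_combination (-(x 1)) * h1 - (x 0) * hprod
    have hu' : x' 0 = x' 1 * ((a1 : ℂ) * x' 1 ^ (a1 - 1)
        + ∑ j ∈ Finset.Ico 1 a1, c1 j * x' 1 ^ (j - 1)) := by
      linear_combination (-(x' 1)) * h1' - (x' 0) * hprod'
    have hx0 : x 0 = x' 0 := by rw [hu, hu', hx1]
    funext i
    fin_cases i
    · exact hx0
    · exact hx1
    · exact hz

end CuspAux

namespace CuspAux2
open Polynomial

lemma finite_of_fibers {α β : Type*} (f : α → β) (s : Set α)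
    (h1 : (f '' s).Finite) (h2 : ∀ b ∈ f '' s, {x | x ∈ s ∧ f x = b}.Finite) : s.Finite := by
  have hsub : s ⊆ ⋃ b ∈ f '' s, {x | x ∈ s ∧ f x = b} := by
    intro x hx
    simp only [Set.mem_iUnion, Set.mem_setOf_eq]
    exact ⟨f x, ⟨x, hx, rfl⟩, hx, rfl⟩
  exact ((h1.biUnion h2).subset hsub)

lemma ne_zero_of_top (A : ℂ) (N : ℕ) (q : ℂ[X]) (hA : A ≠ 0) (hq : q.natDegree < N) :
    C A * X ^ N + q ≠ 0 := by
  intro h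
  have h2 := congrArg (fun p => coeff p N) h
  simp [coeff_eq_zero_of_natDegree_lt hq] at h2
  exact hA h2

lemma finrt (A : ℂ) (N : ℕ) (q : ℂ[X]) (hA : A ≠ 0) (hq : q.natDegree < N) :
    {t : ℂ | A * t ^ N + q.eval t = 0}.Finite := by
  refine (Polynomial.finite_setOf_isRoot (ne_zero_of_top A N q hA hq)).subset ?_
  intro t ht
  simp only [Set.mem_setOf_eq, IsRoot.def, eval_add, eval_mul, eval_pow, eval_C, eval_X]
  exact ht

lemma res2 (A1 B1 C1 A2 B2 C2 y : ℂ)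
    (hA : A1 * y ^ 2 + B1 * y + C1 = 0) (hB : A2 * y ^ 2 + B2 * y + C2 = 0) :
    (A1 * C2 - A2 * C1) ^ 2 - (A1 * B2 - A2 * B1) * (B1 * C2 - B2 * C1) = 0 := by
  have h1 : (A1 * B2 - A2 * B1) * y = -(A1 * C2 - A2 * C1) := by
    linear_combination A1 * hB - A2 * hA
  have h2 : y * ((B1 * C2 - B2 * C1) + (A1 * C2 - A2 * C1) * y) = 0 := by
    linear_combination C2 * hA - C1 * hB
  rcases eq_or_ne y 0 with rfl | hy
  · have hC1 : C1 = 0 := by linear_combination hA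
    have hC2 : C2 = 0 := by linear_combination hB
    subst hC1; subst hC2; ring
  · rcases mul_eq_zero.mp h2 with h | h3
    · exact absurd h hy
    · linear_combination (-(A1 * B2 - A2 * B1)) * h3 + (A1 * C2 - A2 * C1) * h1

lemma caseB (w e f1 f2 c6 : ℂ) (hw : w ≠ 0) (a2 : ℕ) (ha2 : 2 ≤ a2) (c2 : ℕ → ℂ)
    (hc6 : c6 = 0 ∨ (3 ≤ a2 ∧ a2 ≤ 5)) (hcf : c6 ≠ 0 ∨ f2 ≠ 0) :
    {x : Fin 3 → ℂ |
        (2 * x 0 + e = w * (x 1 * x 2)) ∧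
        (c6 * x 1 ^ 2 + (4 * f2 - w ^ 2 * x 2 ^ 2) * x 1 + (2 * f1 + w * e * x 2) = 0) ∧
        (w ^ 2 * x 2 * x 1 ^ 2 + (-(w * e)) * x 1
          + (-(2 * ((a2 : ℂ) * x 2 ^ (a2 - 1)
              + ∑ j ∈ Finset.Ico 1 a2, c2 j * x 2 ^ (j - 1)))) = 0)}.Finite := by
  obtain ⟨r, hrdef⟩ : ∃ p : ℂ[X], p = ∑ j ∈ Finset.Ico 1 a2, C (c2 j) * X ^ (j - 1) := ⟨_, rfl⟩
  obtain ⟨G2p, hG2def⟩ : ∃ p : ℂ[X], p = C (a2 : ℂ) * X ^ (a2 - 1) + r := ⟨_, rfl⟩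
  obtain ⟨A2p, hA2def⟩ : ∃ p : ℂ[X], p = C (w ^ 2) * X := ⟨_, rfl⟩
  obtain ⟨B2p, hB2def⟩ : ∃ p : ℂ[X], p = C (-(w * e)) := ⟨_, rfl⟩
  obtain ⟨C2p, hC2def⟩ : ∃ p : ℂ[X], p = C (-2 : ℂ) * G2p := ⟨_, rfl⟩
  obtain ⟨B1p, hB1def⟩ : ∃ p : ℂ[X], p = C (4 * f2) - C (w ^ 2) * X ^ 2 := ⟨_, rfl⟩
  obtain ⟨C1p, hC1def⟩ : ∃ p : ℂ[X], p = C (2 * f1) + C (w * e) * X := ⟨_, rfl⟩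
  obtain ⟨T, hTdef⟩ : ∃ p : ℂ[X], p = B1p * C2p - B2p * C1p := ⟨_, rfl⟩
  obtain ⟨S2, hS2def⟩ : ∃ p : ℂ[X], p = C c6 * B2p - A2p * B1p := ⟨_, rfl⟩
  obtain ⟨U, hUdef⟩ : ∃ p : ℂ[X], p = C c6 * C2p - A2p * C1p := ⟨_, rfl⟩
  obtain ⟨Rz, hRzdef⟩ : ∃ p : ℂ[X], p = U ^ 2 - S2 * T := ⟨_, rfl⟩
  obtain ⟨rT, hrTdef⟩ : ∃ p : ℂ[X], p = C (4 * f2) * C2p + C (2 * w ^ 2) * X ^ 2 * r - B2p * C1p := ⟨_, rfl⟩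
  obtain ⟨rS, hrSdef⟩ : ∃ p : ℂ[X], p = C (-(c6 * w * e)) - C (4 * f2 * w ^ 2) * X := ⟨_, rfl⟩
  -- degree bounds
  have hrd : r.natDegree ≤ a2 - 2 := by
    rw [hrdef]
    exact natDegree_sum_le_of_forall_le _ _ (fun j hj => (natDegree_C_mul_X_pow_le _ _).trans
      (by rw [Finset.mem_Ico] at hj; omega))
  have hG2d : G2p.natDegree ≤ a2 - 1 := by
    rw [hG2def]
    refine (natDegree_add_le _ _).trans (max_le ((natDegree_C_mul_X_pow_le _ _)) (hrd.trans (by omega)))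
  have hC2d : C2p.natDegree ≤ a2 - 1 := by
    rw [hC2def]
    refine natDegree_mul_le.trans ?_
    rw [natDegree_C, zero_add]; exact hG2d
  have hA2d : A2p.natDegree ≤ 1 := by
    rw [hA2def]
    exact natDegree_mul_le.trans (by rw [natDegree_C, zero_add]; exact natDegree_X_le)
  have hC1d : C1p.natDegree ≤ 1 := by
    rw [hC1def]
    refine (natDegree_add_le _ _).trans (max_le (by rw [natDegree_C]; omega)
      (natDegree_mul_le.trans (by rw [natDegree_C, zero_add]; exact natDegree_X_le)))
  have hB1d : B1p.natDegree ≤ 2 := by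
    rw [hB1def]
    refine (natDegree_sub_le _ _).trans (max_le (by rw [natDegree_C]; omega)
      ((natDegree_C_mul_X_pow_le _ _)))
  have hB2d : B2p.natDegree = 0 := by rw [hB2def]; exact natDegree_C _
  have hrTd : rT.natDegree ≤ a2 := by
    rw [hrTdef]
    refine (natDegree_sub_le _ _).trans (max_le ((natDegree_add_le _ _).trans (max_le ?_ ?_)) ?_)
    · exact natDegree_mul_le.trans (by rw [natDegree_C, zero_add]; exact hC2d.trans (by omega))
    · refine natDegree_mul_le.trans ?_
      have h1 : (C (2 * w ^ 2) * X ^ 2 : ℂ[X]).natDegree ≤ 2 := natDegree_C_mul_X_pow_le _ _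
      omega
    · refine natDegree_mul_le.trans ?_
      omega
  have hrSd : rS.natDegree ≤ 1 := by
    rw [hrSdef]
    refine (natDegree_sub_le _ _).trans (max_le (by rw [natDegree_C]; omega) ?_)
    exact natDegree_mul_le.trans (by rw [natDegree_C, zero_add]; exact natDegree_X_le)
  -- decompositions
  have hT : T = C (2 * a2 * w ^ 2) * X ^ (a2 + 1) + rT := by
    rw [hTdef, hrTdef, hB1def, hC2def, hG2def, hB2def, hC1def,
      show a2 + 1 = 2 + (a2 - 1) by omega, pow_add]
    simp only [C_mul, C_neg, C_pow]
    ring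
  have hS2 : S2 = C (w ^ 4) * X ^ 3 + rS := by
    rw [hS2def, hrSdef, hB2def, hB1def, hA2def]
    simp only [C_mul, C_neg, C_pow]
    ring
  have hTd : T.natDegree ≤ a2 + 1 := by
    rw [hT]
    exact (natDegree_add_le _ _).trans (max_le (natDegree_C_mul_X_pow_le _ _) (hrTd.trans (by omega)))
  have hRz : Rz = C (-(2 * a2 * w ^ 6)) * X ^ (a2 + 4)
      + (U ^ 2 - (C (w ^ 4) * X ^ 3 * rT + rS * T)) := by
    rw [hRzdef, hS2, hT]
    rw [show a2 + 4 = 3 + (a2 + 1) by omega, pow_add]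
    simp only [C_mul, C_neg, C_pow]
    ring
  have hUd : U.natDegree ≤ a2 + 1 := by
    rw [hUdef]
    refine (natDegree_sub_le _ _).trans (max_le ?_ ?_)
    · exact natDegree_mul_le.trans (by rw [natDegree_C, zero_add]; exact hC2d.trans (by omega))
    · exact natDegree_mul_le.trans (by omega)
  have hU2d : (U ^ 2).natDegree ≤ a2 + 3 := by
    rcases hc6 with hc | ⟨h3, h5⟩
    · have hU : U = -(A2p * C1p) := by rw [hUdef, hc]; simp
      have : U.natDegree ≤ 2 := by
        rw [hU, natDegree_neg]
        exact natDegree_mul_le.trans (by omega)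
      exact (natDegree_pow_le).trans (by omega)
    · have : U.natDegree ≤ a2 - 1 := by
        rw [hUdef]
        refine (natDegree_sub_le _ _).trans (max_le ?_ ?_)
        · exact natDegree_mul_le.trans (by rw [natDegree_C, zero_add]; exact hC2d)
        · exact natDegree_mul_le.trans (by omega)
      exact (natDegree_pow_le).trans (by omega)
  have hRestd : (U ^ 2 - (C (w ^ 4) * X ^ 3 * rT + rS * T)).natDegree < a2 + 4 := by
    refine lt_of_le_of_lt ((natDegree_sub_le _ _).trans (max_le hU2d
      ((natDegree_add_le _ _).trans (max_le ?_ ?_)))) (by omega)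
    · refine natDegree_mul_le.trans ?_
      have h1 : (C (w ^ 4) * X ^ 3 : ℂ[X]).natDegree ≤ 3 := natDegree_C_mul_X_pow_le _ _
      omega
    · exact natDegree_mul_le.trans (by omega)
  have hRzne : Rz ≠ 0 := by
    rw [hRz]
    refine ne_zero_of_top _ _ _ ?_ hRestd
    exact neg_ne_zero.mpr (mul_ne_zero (mul_ne_zero two_ne_zero
      (Nat.cast_ne_zero.mpr (by omega))) (pow_ne_zero _ hw))
  -- main fibration over the last coordinate
  apply finite_of_fibers (fun x => x 2)
  · refine ((Polynomial.finite_setOf_isRoot hRzne).subset ?_)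
    rintro z ⟨x, hx, rfl⟩
    obtain ⟨h0, hA1, hB1⟩ := hx
    have hres := res2 c6 (4 * f2 - w ^ 2 * x 2 ^ 2) (2 * f1 + w * e * x 2) (w ^ 2 * x 2)
      (-(w * e)) (-(2 * ((a2 : ℂ) * x 2 ^ (a2 - 1)
        + ∑ j ∈ Finset.Ico 1 a2, c2 j * x 2 ^ (j - 1)))) (x 1) hA1 hB1
    show Rz.IsRoot (x 2)
    rw [IsRoot.def, hRzdef, hUdef, hS2def, hTdef, hA2def, hB2def, hC2def, hB1def, hC1def,
      hG2def, hrdef]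
    simp only [eval_add, eval_sub, eval_mul, eval_pow, eval_C, eval_X, eval_finset_sum]
    linear_combination hres
  · intro b _
    apply finite_of_fibers (fun x => x 1)
    · -- the middle coordinate lies in a finite set
      rcases eq_or_ne b 0 with rfl | hb0
      · rcases eq_or_ne c6 0 with hc0 | hc0
        · have hf2 : f2 ≠ 0 := hcf.resolve_left (by simp [hc0])
          refine ((finrt (4 * f2) 1 (C (2 * f1)) (by simp [hf2]) (by rw [natDegree_C]; omega)).subset ?_)
          rintro y ⟨x, ⟨⟨h0, hA1, hB1⟩, hb⟩, rfl⟩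
          simp only [Set.mem_setOf_eq, eval_C]
          rw [hb] at hA1
          rw [hc0] at hA1
          linear_combination hA1
        · refine ((finrt c6 2 (C (4 * f2) * X + C (2 * f1)) hc0 ?_).subset ?_)
          · have hb1 : (C (4 * f2) * X + C (2 * f1) : ℂ[X]).natDegree ≤ 1 := by
              refine (natDegree_add_le _ _).trans (max_le ?_ ?_)
              · exact natDegree_mul_le.trans (by rw [natDegree_C, zero_add]; exact natDegree_X_le)
              · rw [natDegree_C]; omega
            omega
          · rintro y ⟨x, ⟨⟨h0, hA1, hB1⟩, hb⟩, rfl⟩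
            simp only [Set.mem_setOf_eq, eval_add, eval_mul, eval_C, eval_X]
            rw [hb] at hA1
            linear_combination hA1
      · refine ((finrt (w ^ 2 * b) 2 (C (-(w * e)) * X + C (-(2 * ((a2 : ℂ) * b ^ (a2 - 1)
            + ∑ j ∈ Finset.Ico 1 a2, c2 j * b ^ (j - 1)))))
            (mul_ne_zero (pow_ne_zero _ hw) hb0) ?_).subset ?_)
        · have hb1 : (C (-(w * e)) * X + C (-(2 * ((a2 : ℂ) * b ^ (a2 - 1)
              + ∑ j ∈ Finset.Ico 1 a2, c2 j * b ^ (j - 1)))) : ℂ[X]).natDegree ≤ 1 := by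
            refine (natDegree_add_le _ _).trans (max_le ?_ ?_)
            · exact natDegree_mul_le.trans (by rw [natDegree_C, zero_add]; exact natDegree_X_le)
            · rw [natDegree_C]; omega
          omega
        · rintro y ⟨x, ⟨⟨h0, hA1, hB1⟩, hb⟩, rfl⟩
          simp only [Set.mem_setOf_eq, eval_add, eval_mul, eval_C, eval_X]
          rw [hb] at hB1
          linear_combination hB1
    · -- sub-fibers are subsingletons
      intro c _
      apply Set.Subsingleton.finite
      rintro x ⟨⟨⟨h0, _, _⟩, hb⟩, hc⟩ x' ⟨⟨⟨h0', _, _⟩, hb'⟩, hc'⟩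
      have h1 : x 1 = x' 1 := by rw [hc, hc']
      have h2 : x 2 = x' 2 := by rw [hb, hb']
      have h00 : x 0 = x' 0 := by
        have : (2 : ℂ) * x 0 = 2 * x' 0 := by
          have := h0'
          rw [← h1, ← h2] at this
          linear_combination h0 - this
        exact mul_left_cancel₀ two_ne_zero this
      funext i
      fin_cases i
      · exact h00
      · exact h1
      · exact h2

end CuspAux2




open MvPolynomial

/-- The universal unfolding `F_A` of the affine cusp polynomial of type
`A = (a 0, a 1, a 2)`. -/
noncomputable def cuspUnfolding (a : Fin 3 → ℕ) (s1 : ℂ) (sij : Fin 3 → ℕ → ℂ) (sμ : ℂ) :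
    MvPolynomial (Fin 3) ℂ :=
  (∑ i, X i ^ a i) - C sμ⁻¹ * (X 0 * X 1 * X 2) + C s1
    + ∑ i, ∑ j ∈ Finset.Ico 1 (a i), C (sij i j) * X i ^ j


namespace CuspAux

lemma evalpd (a : Fin 3 → ℕ) (s1 : ℂ) (sij : Fin 3 → ℕ → ℂ) (sμ : ℂ) (x : Fin 3 → ℂ)
    (i : Fin 3) :
    MvPolynomial.eval x (MvPolynomial.pderiv i (cuspUnfolding a s1 sij sμ)) =
      (a i : ℂ) * x i ^ (a i - 1)
        + (∑ j ∈ Finset.Ico 1 (a i), sij i j * j * x i ^ (j - 1))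
        - sμ⁻¹ * (x (i + 1) * x (i + 2)) := by
  have key : ∀ i : Fin 3, (∑ j ∈ Finset.Ico 1 (a i), sij i j * j * x i ^ (j - 1))
      = ∑ j ∈ Finset.Ico 1 (a i), x i ^ (j - 1) * sij i j * j :=
    fun i => Finset.sum_congr rfl fun j _ => by ring
  fin_cases i <;>
    simp (config := { decide := true }) [cuspUnfolding, Fin.sum_univ_three,
      MvPolynomial.pderiv_mul, MvPolynomial.pderiv_pow, MvPolynomial.pderiv_C,
      MvPolynomial.pderiv_X, map_sum, MvPolynomial.pderiv_C_mul, Pi.single_apply,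
      mul_comm, mul_assoc, mul_left_comm]
  all_goals ring

lemma one_div_anti (n m : ℕ) (hn : 0 < n) (hnm : n ≤ m) : (1 : ℚ) / m ≤ 1 / n := by
  apply one_div_le_one_div_of_le
  · exact_mod_cast hn
  · exact_mod_cast hnm

end CuspAux

/-- For every choice of parameters `s ∈ ℂ^{μ_A−1}`, `s_μ ∈ ℂ∖{0}`, the set of critical points
of the polynomial `F(x) = F_A(x; s, s_μ)` is finite (tameness of the universal unfolding). -/
theorem criticalSet_finite
    (a : Fin 3 → ℕ) (ha : ∀ i, 0 < a i)
    (hord : a 0 ≤ a 1 ∧ a 1 ≤ a 2)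
    (hχ : 1 < (1 : ℚ) / (a 0) + 1 / (a 1) + 1 / (a 2))
    (s1 : ℂ) (sij : Fin 3 → ℕ → ℂ) (sμ : ℂ) (hsμ : sμ ≠ 0) :
    {x : Fin 3 → ℂ | ∀ i : Fin 3, eval x (pderiv i (cuspUnfolding a s1 sij sμ)) = 0}.Finite := by
  have hw : sμ⁻¹ ≠ 0 := inv_ne_zero hsμ
  -- basic arithmetic consequences of `hχ`
  have h10 : (1 : ℚ) / (a 1) ≤ 1 / (a 0) := CuspAux.one_div_anti _ _ (ha 0) hord.1
  have h21 : (1 : ℚ) / (a 2) ≤ 1 / (a 1) :=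
    CuspAux.one_div_anti _ _ (lt_of_lt_of_le (ha 0) hord.1) hord.2
  have ha0le : a 0 ≤ 2 := by
    by_contra h
    push_neg at h
    have k0 : (1 : ℚ) / (a 0) ≤ 1 / 3 := CuspAux.one_div_anti 3 _ (by norm_num) (by omega)
    linarith
  have ha0 : a 0 = 1 ∨ a 0 = 2 := by have := ha 0; omega
  rcases ha0 with ha0 | ha0
  · -- case a₀ = 1
    refine Set.Finite.subset (CuspAux.caseA sμ⁻¹ hw (a 1) (a 2) (lt_of_lt_of_le (ha 0) hord.1)
      hord.2 (fun j => sij 1 j * j) (fun j => sij 2 j * j)) ?_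
    intro x hx
    have h0 := hx 0; have h1 := hx 1; have h2 := hx 2
    rw [CuspAux.evalpd] at h0 h1 h2
    simp only [show ((0:Fin 3)+1) = 1 from by decide, show ((0:Fin 3)+2) = 2 from by decide,
        show ((1:Fin 3)+1) = 2 from by decide, show ((1:Fin 3)+2) = 0 from by decide,
        show ((2:Fin 3)+1) = 0 from by decide, show ((2:Fin 3)+2) = 1 from by decide] at h0 h1 h2
    rw [ha0] at h0
    simp only [Finset.Ico_self, Finset.sum_empty, pow_zero, mul_one, Nat.cast_one,
      add_zero] at h0
    refine ⟨?_, ?_, ?_⟩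
    · show (1 : ℂ) = sμ⁻¹ * (x 1 * x 2)
      linear_combination h0
    · show (a 1 : ℂ) * x 1 ^ (a 1 - 1)
          + (∑ j ∈ Finset.Ico 1 (a 1), (sij 1 j * j) * x 1 ^ (j - 1)) = sμ⁻¹ * (x 2 * x 0)
      linear_combination h1
    · show (a 2 : ℂ) * x 2 ^ (a 2 - 1)
          + (∑ j ∈ Finset.Ico 1 (a 2), (sij 2 j * j) * x 2 ^ (j - 1)) = sμ⁻¹ * (x 0 * x 1)
      linear_combination h2
  · -- case a₀ = 2
    have ha1le : a 1 ≤ 3 := by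
      by_contra h
      push_neg at h
      have k1 : (1 : ℚ) / (a 1) ≤ 1 / 4 := CuspAux.one_div_anti 4 _ (by norm_num) (by omega)
      have k0 : (1 : ℚ) / (a 0) = 1 / 2 := by rw [ha0]; norm_num
      linarith
    have ha1 : a 1 = 2 ∨ a 1 = 3 := by have := hord.1; omega
    have ha2ge : 2 ≤ a 2 := by have := hord.1; have := hord.2; omega
    rcases ha1 with ha1 | ha1
    · -- (2, 2, n)
      refine Set.Finite.subset (CuspAux2.caseB sμ⁻¹ (sij 0 1) (sij 1 1) 1 0 hw (a 2) ha2ge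
        (fun j => sij 2 j * j) (Or.inl rfl) (Or.inr one_ne_zero)) ?_
      intro x hx
      have h0 := hx 0; have h1 := hx 1; have h2 := hx 2
      rw [CuspAux.evalpd] at h0 h1 h2
      simp only [show ((0:Fin 3)+1) = 1 from by decide, show ((0:Fin 3)+2) = 2 from by decide,
        show ((1:Fin 3)+1) = 2 from by decide, show ((1:Fin 3)+2) = 0 from by decide,
        show ((2:Fin 3)+1) = 0 from by decide, show ((2:Fin 3)+2) = 1 from by decide] at h0 h1 h2
      rw [ha0] at h0
      rw [ha1] at h1
      simp only [show Finset.Ico 1 2 = {1} from by decide, Finset.sum_singleton, pow_zero,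
        pow_one, Nat.cast_one, Nat.cast_ofNat, mul_one] at h0 h1
      have hEq0 : 2 * x 0 + sij 0 1 = sμ⁻¹ * (x 1 * x 2) := by linear_combination h0
      refine ⟨hEq0, ?_, ?_⟩
      · show (0 : ℂ) * x 1 ^ 2 + (4 * 1 - sμ⁻¹ ^ 2 * x 2 ^ 2) * x 1
            + (2 * sij 1 1 + sμ⁻¹ * sij 0 1 * x 2) = 0
        linear_combination 2 * h1 + sμ⁻¹ * x 2 * hEq0
      · show sμ⁻¹ ^ 2 * x 2 * x 1 ^ 2 + (-(sμ⁻¹ * sij 0 1)) * x 1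
            + (-(2 * ((a 2 : ℂ) * x 2 ^ (a 2 - 1)
              + ∑ j ∈ Finset.Ico 1 (a 2), (sij 2 j * j) * x 2 ^ (j - 1)))) = 0
        linear_combination (-2 : ℂ) * h2 - sμ⁻¹ * x 1 * hEq0
    · -- (2, 3, n), n ≤ 5
      have ha2le : a 2 ≤ 5 := by
        by_contra h
        push_neg at h
        have k2 : (1 : ℚ) / (a 2) ≤ 1 / 6 := CuspAux.one_div_anti 6 _ (by norm_num) (by omega)
        have k0 : (1 : ℚ) / (a 0) = 1 / 2 := by rw [ha0]; norm_num
        have k1 : (1 : ℚ) / (a 1) = 1 / 3 := by rw [ha1]; norm_num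
        linarith
      refine Set.Finite.subset (CuspAux2.caseB sμ⁻¹ (sij 0 1) (sij 1 1) (sij 1 2) 6 hw (a 2)
        ha2ge (fun j => sij 2 j * j) (Or.inr ⟨by omega, ha2le⟩)
        (Or.inl (by norm_num))) ?_
      intro x hx
      have h0 := hx 0; have h1 := hx 1; have h2 := hx 2
      rw [CuspAux.evalpd] at h0 h1 h2
      simp only [show ((0:Fin 3)+1) = 1 from by decide, show ((0:Fin 3)+2) = 2 from by decide,
        show ((1:Fin 3)+1) = 2 from by decide, show ((1:Fin 3)+2) = 0 from by decide,
        show ((2:Fin 3)+1) = 0 from by decide, show ((2:Fin 3)+2) = 1 from by decide] at h0 h1 h2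
      rw [ha0] at h0
      rw [ha1] at h1
      simp only [show Finset.Ico 1 2 = {1} from by decide, Finset.sum_singleton, pow_zero,
        pow_one, Nat.cast_one, Nat.cast_ofNat, mul_one] at h0
      simp only [show Finset.Ico 1 3 = ({1, 2} : Finset ℕ) from by decide,
        Finset.sum_pair (show (1:ℕ) ≠ 2 by norm_num), pow_zero, pow_one,
        Nat.cast_one, Nat.cast_ofNat, mul_one] at h1
      have hEq0 : 2 * x 0 + sij 0 1 = sμ⁻¹ * (x 1 * x 2) := by linear_combination h0
      refine ⟨hEq0, ?_, ?_⟩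
      · show (6 : ℂ) * x 1 ^ 2 + (4 * sij 1 2 - sμ⁻¹ ^ 2 * x 2 ^ 2) * x 1
            + (2 * sij 1 1 + sμ⁻¹ * sij 0 1 * x 2) = 0
        linear_combination 2 * h1 + sμ⁻¹ * x 2 * hEq0
      · show sμ⁻¹ ^ 2 * x 2 * x 1 ^ 2 + (-(sμ⁻¹ * sij 0 1)) * x 1
            + (-(2 * ((a 2 : ℂ) * x 2 ^ (a 2 - 1)
              + ∑ j ∈ Finset.Ico 1 (a 2), (sij 2 j * j) * x 2 ^ (j - 1)))) = 0
        linear_combination (-2 : ℂ) * h2 - sμ⁻¹ * x 1 * hEq0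
end

section
/- For every choice of complex numbers s_{i,j} (i = 1,2,3, 1 ≤ j ≤ a_i−1), the ℂ-algebra ℂ[x_1,x_2,x_3]/(x_2x_3, x_3x_1, x_1x_2, H_1(x,s), H_2(x,s)) is a ℂ-vector space of dimension μ_A. In particular (taking all s_{i,j} = 0), dim_ℂ ℂ[x_1,x_2,x_3]/(x_2x_3, x_3x_1, x_1x_2, a_1x_1^{a_1} − a_2x_2^{a_2}, a_2x_2^{a_2} − a_3x_3^{a_3}) = μ_A = a_1 + a_2 + a_3 − 1. -/
open MvPolynomial

/-- The polynomial `aᵢ xᵢ^{aᵢ} + Σ_{j=1}^{aᵢ−1} j·s_{i,j}·xᵢʲ` in `ℂ[x₁,x₂,x₃]`, so that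
`H₁(x,s) = hpart 0 − hpart 1` and `H₂(x,s) = hpart 1 − hpart 2`. -/
noncomputable def hpart (a : Fin 3 → ℕ) (sij : Fin 3 → ℕ → ℂ) (i : Fin 3) :
    MvPolynomial (Fin 3) ℂ :=
  (a i : MvPolynomial (Fin 3) ℂ) * X i ^ a i
    + ∑ j ∈ Finset.Ico 1 (a i), (j : MvPolynomial (Fin 3) ℂ) * C (sij i j) * X i ^ j

/-! ### The recursively defined coefficient sequence for the annihilating functionals -/

noncomputable def cseq (A : ℕ) (s : ℕ → ℂ) (d : ℕ → ℂ) (γ : ℂ) : ℕ → ℂ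
  | n =>
    if _ : n < A then d n
    else if _ : n = A then
      (γ - ∑ j ∈ (Finset.Ico 1 A).attach, (j.1 : ℂ) * s j.1 * cseq A s d γ j.1) / A
    else
      -(∑ j ∈ (Finset.Ico 1 A).attach, (j.1 : ℂ) * s j.1 * cseq A s d γ (n - A + j.1)) / A
  termination_by n => n
  decreasing_by
  · have := Finset.mem_Ico.mp j.2; omega
  · have := Finset.mem_Ico.mp j.2; omega

lemma cseq_lt {A : ℕ} {s d : ℕ → ℂ} {γ : ℂ} {n : ℕ} (h : n < A) :
    cseq A s d γ n = d n := by rw [cseq]; simp [h]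

lemma cseq_gamma {A : ℕ} {s d : ℕ → ℂ} {γ : ℂ} (hA : (A : ℂ) ≠ 0) :
    (A : ℂ) * cseq A s d γ A + ∑ j ∈ Finset.Ico 1 A, (j : ℂ) * s j * cseq A s d γ j = γ := by
  conv_lhs => rw [cseq]
  have h0 : ¬ (A < A) := lt_irrefl A
  rw [dif_neg h0, dif_pos rfl, ← Finset.sum_attach (Finset.Ico 1 A)
    (fun j => (j : ℂ) * s j * cseq A s d γ j)]
  field_simp
  ring

lemma cseq_rec {A : ℕ} {s d : ℕ → ℂ} {γ : ℂ} {k : ℕ} (hA : (A : ℂ) ≠ 0) (hk : 1 ≤ k) :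
    (A : ℂ) * cseq A s d γ (k + A) +
      ∑ j ∈ Finset.Ico 1 A, (j : ℂ) * s j * cseq A s d γ (k + j) = 0 := by
  conv_lhs => rw [cseq]
  have h0 : ¬ (k + A < A) := by omega
  have h1 : ¬ (k + A = A) := by omega
  rw [dif_neg h0, dif_neg h1, Finset.sum_attach (Finset.Ico 1 A)
    (fun j => (j : ℂ) * s j * cseq A s d γ (k + A - A + j))]
  have he : ∀ j, k + A - A + j = k + j := by intro j; omega
  simp only [he]
  field_simp
  ring

/-! ### Weight functions and the associated linear functionals -/

open Classical in
/-- weight of a monomial exponent: `e` at `0`, `c i n` at `single i n` (n>0), `0` on mixed. -/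
noncomputable def wt (c : Fin 3 → ℕ → ℂ) (e : ℂ) (m : Fin 3 →₀ ℕ) : ℂ :=
  if m = 0 then e
  else ∑ i : Fin 3, if m = Finsupp.single i (m i) then c i (m i) else 0

lemma wt_zero (c : Fin 3 → ℕ → ℂ) (e : ℂ) : wt c e 0 = e := by simp [wt]

lemma wt_single (c : Fin 3 → ℕ → ℂ) (e : ℂ) (i : Fin 3) {n : ℕ} (hn : n ≠ 0) :
    wt c e (Finsupp.single i n) = c i n := by
  classical
  have hne : (Finsupp.single i n : Fin 3 →₀ ℕ) ≠ 0 := by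
    intro h; apply hn; simpa using DFunLike.congr_fun h i
  rw [wt, if_neg hne, Finset.sum_eq_single i]
  · simp
  · intro i' _ hi'
    rw [if_neg]
    intro h
    have h0 : (Finsupp.single i n : Fin 3 →₀ ℕ) i' = 0 :=
      Finsupp.single_eq_of_ne' (fun hh => hi' hh.symm)
    rw [h0, Finsupp.single_zero] at h
    exact hne h
  · intro h; exact absurd (Finset.mem_univ i) h

lemma wt_mixed (c : Fin 3 → ℕ → ℂ) (e : ℂ) {m : Fin 3 →₀ ℕ} {i : Fin 3} {n : ℕ}
    (hm : m ≠ 0) (hp : m ≠ Finsupp.single i (m i)) (hn : n ≠ 0) :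
    wt c e (m + Finsupp.single i n) = 0 := by
  classical
  have hval : (m + Finsupp.single i n) i = m i + n := by simp
  have hne : m + Finsupp.single i n ≠ 0 := by
    intro h
    have h2 := DFunLike.congr_fun h i
    rw [hval] at h2
    simp at h2
    exact hn h2.2
  rw [wt, if_neg hne]
  apply Finset.sum_eq_zero
  intro i' _
  rw [if_neg]
  intro h
  have hi : i' = i := by
    by_contra hne'
    have h0 := DFunLike.congr_fun h i
    rw [hval, Finsupp.single_eq_of_ne' hne'] at h0
    omega
  subst hi
  refine hp ?_
  ext j
  rcases eq_or_ne j i' with hj | hj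
  · subst hj; simp
  · have hvj := DFunLike.congr_fun h j
    have e1 : (Finsupp.single i' n : Fin 3 →₀ ℕ) j = 0 := Finsupp.single_eq_of_ne' (Ne.symm hj)
    have e2 : (Finsupp.single i' ((m + Finsupp.single i' n) i') : Fin 3 →₀ ℕ) j = 0 :=
      Finsupp.single_eq_of_ne' (Ne.symm hj)
    rw [Finsupp.add_apply, e1, add_zero, e2] at hvj
    rw [hvj]
    exact (Finsupp.single_eq_of_ne' (Ne.symm hj)).symm

noncomputable def Lmap (w : (Fin 3 →₀ ℕ) → ℂ) : MvPolynomial (Fin 3) ℂ →ₗ[ℂ] ℂ :=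
  Finsupp.lsum ℂ (fun m => LinearMap.toSpanSingleton ℂ ℂ (w m))
    ∘ₗ (AddMonoidAlgebra.coeffLinearEquiv ℂ).toLinearMap

lemma Lmap_monomial (w : (Fin 3 →₀ ℕ) → ℂ) (m : Fin 3 →₀ ℕ) (r : ℂ) :
    Lmap w (monomial m r) = r * w m := by
  show (Finsupp.lsum ℂ (fun m => LinearMap.toSpanSingleton ℂ ℂ (w m))) (AddMonoidAlgebra.coeff (monomial m r)) = _
  rw [← single_eq_monomial, AddMonoidAlgebra.coeff_single]
  simp [LinearMap.toSpanSingleton_apply]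

lemma Lmap_mul_eq_zero (w : (Fin 3 →₀ ℕ) → ℂ) (g : MvPolynomial (Fin 3) ℂ)
    (h : ∀ m : Fin 3 →₀ ℕ, Lmap w (monomial m 1 * g) = 0) (f : MvPolynomial (Fin 3) ℂ) :
    Lmap w (f * g) = 0 := by
  induction f using MvPolynomial.induction_on' with
  | monomial m r =>
    have hm : (monomial m r : MvPolynomial (Fin 3) ℂ) = r • monomial m 1 := by
      simp [MvPolynomial.smul_monomial]
    rw [hm, smul_mul_assoc, map_smul, h m, smul_zero]
  | add p q hp hq => rw [add_mul, map_add, hp, hq, add_zero]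

lemma Lmap_ann (w : (Fin 3 →₀ ℕ) → ℂ) (S : Set (MvPolynomial (Fin 3) ℂ))
    (h : ∀ g ∈ S, ∀ m : Fin 3 →₀ ℕ, Lmap w (monomial m 1 * g) = 0)
    {p : MvPolynomial (Fin 3) ℂ} (hp : p ∈ Ideal.span S) : Lmap w p = 0 := by
  have key : ∀ f, Lmap w (f * p) = 0 := by
    refine Submodule.span_induction (p := fun x _ => ∀ f, Lmap w (f * x) = 0)
      ?_ ?_ ?_ ?_ hp
    · intro g hg f; exact Lmap_mul_eq_zero w g (h g hg) f
    · intro f; simp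
    · intro x y _ _ hx hy f; rw [mul_add, map_add, hx, hy, add_zero]
    · intro r x _ hx f
      rw [smul_eq_mul, show f * (r * x) = (f * r) * x by ring, hx]
  simpa using key 1

/-! ### Computation of the functionals on monomial multiples of the generators -/

section Main

variable (a : Fin 3 → ℕ) (sij : Fin 3 → ℕ → ℂ)

lemma mono_mul_hpart (m : Fin 3 →₀ ℕ) (i : Fin 3) :
    monomial m 1 * hpart a sij i
      = monomial (m + Finsupp.single i (a i)) ((a i : ℂ))
        + ∑ j ∈ Finset.Ico 1 (a i), monomial (m + Finsupp.single i j) ((j : ℂ) * sij i j) := by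
  rw [hpart, mul_add, Finset.mul_sum]
  congr 1
  · rw [← map_natCast (C : ℂ →+* MvPolynomial (Fin 3) ℂ) (a i), X_pow_eq_monomial,
      C_mul_monomial, monomial_mul]
    simp
  · refine Finset.sum_congr rfl fun j _ => ?_
    rw [← map_natCast (C : ℂ →+* MvPolynomial (Fin 3) ℂ) j, ← map_mul, X_pow_eq_monomial,
      C_mul_monomial, monomial_mul]
    simp

lemma Lmap_mono_hpart (ha : ∀ i, 0 < a i) (d : Fin 3 → ℕ → ℂ) (γ e : ℂ)
    (m : Fin 3 →₀ ℕ) (i : Fin 3) :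
    Lmap (wt (fun i' => cseq (a i') (sij i') (d i') γ) e) (monomial m 1 * hpart a sij i)
      = if m = 0 then γ else 0 := by
  set c : Fin 3 → ℕ → ℂ := fun i' => cseq (a i') (sij i') (d i') γ with hc
  have hA : ((a i : ℂ)) ≠ 0 := Nat.cast_ne_zero.mpr (ha i).ne'
  rw [mono_mul_hpart, map_add, map_sum]
  simp only [Lmap_monomial]
  by_cases hm : m = 0
  · subst hm
    rw [if_pos rfl]
    simp only [zero_add]
    rw [wt_single c e i (ha i).ne']
    rw [Finset.sum_congr rfl (fun j hj => by
      rw [wt_single c e i (by have := Finset.mem_Ico.mp hj; omega)])]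
    exact cseq_gamma hA
  · rw [if_neg hm]
    by_cases hpure : m = Finsupp.single i (m i)
    · have hk : m i ≠ 0 := by
        intro h0; apply hm; rw [hpure, h0, Finsupp.single_zero]
      have hadd : ∀ nn : ℕ, m + Finsupp.single i nn = Finsupp.single i (m i + nn) := by
        intro nn
        conv_lhs => rw [hpure]
        rw [← Finsupp.single_add]
      rw [hadd, wt_single c e i (by omega)]
      rw [Finset.sum_congr rfl (fun j hj => by
        rw [hadd, wt_single c e i (by have := Finset.mem_Ico.mp hj; omega)])]
      exact cseq_rec hA (by omega)
    · have hz : ∀ nn : ℕ, nn ≠ 0 → wt c e (m + Finsupp.single i nn) = 0 :=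
        fun nn hnn => wt_mixed c e hm hpure hnn
      rw [hz (a i) (ha i).ne', mul_zero]
      rw [Finset.sum_eq_zero (fun j hj => by
        rw [hz j (by have := Finset.mem_Ico.mp hj; omega), mul_zero])]
      ring

lemma X_mul_X_eq_monomial (i j : Fin 3) :
    (X i * X j : MvPolynomial (Fin 3) ℂ)
      = monomial (Finsupp.single i 1 + Finsupp.single j 1) 1 := by
  rw [show (X i : MvPolynomial (Fin 3) ℂ) = X i ^ 1 by rw [pow_one],
    show (X j : MvPolynomial (Fin 3) ℂ) = X j ^ 1 by rw [pow_one],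
    X_pow_eq_monomial, X_pow_eq_monomial, monomial_mul, one_mul]

lemma wt_XX (c : Fin 3 → ℕ → ℂ) (e : ℂ) (i j : Fin 3) (hij : i ≠ j) (m : Fin 3 →₀ ℕ) :
    wt c e (m + (Finsupp.single i 1 + Finsupp.single j 1)) = 0 := by
  rw [← add_assoc]
  refine wt_mixed c e ?_ ?_ one_ne_zero
  · intro h
    have := DFunLike.congr_fun h i
    simp [Finsupp.single_eq_same] at this
  · intro h
    have hh := DFunLike.congr_fun h i
    rw [Finsupp.add_apply, Finsupp.single_eq_same,
      Finsupp.single_eq_of_ne' (Ne.symm hij)] at hh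
    omega

/-- the five generators -/
def Sgen : Set (MvPolynomial (Fin 3) ℂ) :=
  {X 1 * X 2, X 2 * X 0, X 0 * X 1,
    hpart a sij 0 - hpart a sij 1, hpart a sij 1 - hpart a sij 2}

lemma Lmap_gen_zero (ha : ∀ i, 0 < a i) (d : Fin 3 → ℕ → ℂ) (γ e : ℂ) :
    ∀ g ∈ Sgen a sij, ∀ m : Fin 3 →₀ ℕ,
      Lmap (wt (fun i' => cseq (a i') (sij i') (d i') γ) e) (monomial m 1 * g) = 0 := by
  intro g hg m
  have hXX : ∀ (i j : Fin 3), i ≠ j →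
      Lmap (wt (fun i' => cseq (a i') (sij i') (d i') γ) e) (monomial m 1 * (X i * X j)) = 0 := by
    intro i j hij
    rw [X_mul_X_eq_monomial, monomial_mul, one_mul, Lmap_monomial, wt_XX _ _ i j hij, mul_zero]
  have hdiff : ∀ (i i' : Fin 3),
      Lmap (wt (fun i'' => cseq (a i'') (sij i'') (d i'') γ) e)
        (monomial m 1 * (hpart a sij i - hpart a sij i')) = 0 := by
    intro i i'
    rw [mul_sub, map_sub, Lmap_mono_hpart a sij ha, Lmap_mono_hpart a sij ha, sub_self]
  rcases hg with hg | hg | hg | hg | hg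
  · rw [hg]; exact hXX 1 2 (by decide)
  · rw [hg]; exact hXX 2 0 (by decide)
  · rw [hg]; exact hXX 0 1 (by decide)
  · rw [hg]; exact hdiff 0 1
  · rw [Set.mem_singleton_iff] at hg; rw [hg]; exact hdiff 1 2

end Main

/-! ### The quotient algebra, its spanning family and independence -/

section Quot

variable (a : Fin 3 → ℕ) (sij : Fin 3 → ℕ → ℂ)

/-- the basis index type -/
abbrev bIdx (a : Fin 3 → ℕ) : Type := Option (Option (Σ i : Fin 3, Fin (a i - 1)))

noncomputable def pre : bIdx a → MvPolynomial (Fin 3) ℂ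
  | none => 1
  | some none => hpart a sij 1
  | some (some ⟨i, j⟩) => X i ^ ((j : ℕ) + 1)

noncomputable def vq : bIdx a → (MvPolynomial (Fin 3) ℂ ⧸ Ideal.span (Sgen a sij)) :=
  fun x => Ideal.Quotient.mkₐ ℂ (Ideal.span (Sgen a sij)) (pre a sij x)

lemma XX_mem : ∀ i j : Fin 3, i ≠ j → (X i * X j : MvPolynomial (Fin 3) ℂ)
    ∈ Ideal.span (Sgen a sij) := by
  have mem : ∀ p ∈ Sgen a sij, p ∈ Ideal.span (Sgen a sij) := fun p hp => Ideal.subset_span hp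
  have h12 := mem _ (by left; rfl)
  have h20 := mem _ (by right; left; rfl)
  have h01 := mem _ (by right; right; left; rfl)
  intro i j hij
  fin_cases i <;> fin_cases j <;>
    first
      | exact absurd rfl hij
      | assumption
      | (rw [mul_comm]; assumption)

lemma mono_mixed_mem {m : Fin 3 →₀ ℕ} {i j : Fin 3} (hij : i ≠ j)
    (hi : m i ≠ 0) (hj : m j ≠ 0) :
    (monomial m 1 : MvPolynomial (Fin 3) ℂ) ∈ Ideal.span (Sgen a sij) := by
  classical
  have hsplit : (m - Finsupp.single i 1 - Finsupp.single j 1)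
      + (Finsupp.single i 1 + Finsupp.single j 1) = m := by
    ext k
    simp only [Finsupp.add_apply, Finsupp.tsub_apply, Finsupp.single_apply]
    by_cases hki : i = k <;> by_cases hkj : j = k <;>
      first
        | (exact absurd (hki.symm.trans hkj : i = j) hij)
        | (subst hki; simp_all; omega)
        | (subst hkj; simp_all; omega)
        | simp_all
  have heq : (monomial m 1 : MvPolynomial (Fin 3) ℂ)
      = monomial (m - Finsupp.single i 1 - Finsupp.single j 1) 1 * (X i * X j) := by
    rw [X_mul_X_eq_monomial, monomial_mul, one_mul, hsplit]
  rw [heq]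
  exact Ideal.mul_mem_left _ _ (XX_mem a sij i j hij)

lemma hpart_eq_X_mul (ha : ∀ i, 0 < a i) (i : Fin 3) :
    hpart a sij i = X i * ((a i : MvPolynomial (Fin 3) ℂ) * X i ^ (a i - 1)
      + ∑ j ∈ Finset.Ico 1 (a i),
          (j : MvPolynomial (Fin 3) ℂ) * C (sij i j) * X i ^ (j - 1)) := by
  rw [hpart, mul_add, Finset.mul_sum]
  congr 1
  · rw [show X i * ((a i : MvPolynomial (Fin 3) ℂ) * X i ^ (a i - 1))
      = (a i : MvPolynomial (Fin 3) ℂ) * (X i * X i ^ (a i - 1)) by ring,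
      ← pow_succ', Nat.sub_add_cancel (ha i)]
  · refine Finset.sum_congr rfl fun j hj => ?_
    have hj1 : 1 ≤ j := (Finset.mem_Ico.mp hj).1
    rw [show X i * ((j : MvPolynomial (Fin 3) ℂ) * C (sij i j) * X i ^ (j - 1))
      = (j : MvPolynomial (Fin 3) ℂ) * C (sij i j) * (X i * X i ^ (j - 1)) by ring,
      ← pow_succ', Nat.sub_add_cancel hj1]

lemma X_pow_mul_hpart_ne_mem (ha : ∀ i, 0 < a i) {i i' : Fin 3} (hne : i ≠ i') {k : ℕ}
    (hk : 1 ≤ k) : X i ^ k * hpart a sij i' ∈ Ideal.span (Sgen a sij) := by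
  obtain ⟨k', rfl⟩ : ∃ k', k = k' + 1 := ⟨k - 1, by omega⟩
  rw [hpart_eq_X_mul a sij ha i']
  have heq : X i ^ (k' + 1) * (X i' * ((a i' : MvPolynomial (Fin 3) ℂ) * X i' ^ (a i' - 1)
      + ∑ j ∈ Finset.Ico 1 (a i'),
          (j : MvPolynomial (Fin 3) ℂ) * C (sij i' j) * X i' ^ (j - 1)))
      = (X i ^ k' * ((a i' : MvPolynomial (Fin 3) ℂ) * X i' ^ (a i' - 1)
      + ∑ j ∈ Finset.Ico 1 (a i'),
          (j : MvPolynomial (Fin 3) ℂ) * C (sij i' j) * X i' ^ (j - 1))) * (X i * X i') := by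
    ring
  rw [heq]
  exact Ideal.mul_mem_left _ _ (XX_mem a sij i i' hne)

lemma diff01_mem : hpart a sij 0 - hpart a sij 1 ∈ Ideal.span (Sgen a sij) :=
  Ideal.subset_span (by right; right; right; left; rfl)

lemma diff12_mem : hpart a sij 1 - hpart a sij 2 ∈ Ideal.span (Sgen a sij) :=
  Ideal.subset_span (by right; right; right; right; rfl)

lemma X_pow_mul_hpart_self_mem (ha : ∀ i, 0 < a i) (i : Fin 3) {k : ℕ} (hk : 1 ≤ k) :
    X i ^ k * hpart a sij i ∈ Ideal.span (Sgen a sij) := by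
  fin_cases i
  · have h1 : X 0 ^ k * (hpart a sij 0 - hpart a sij 1) ∈ Ideal.span (Sgen a sij) :=
      Ideal.mul_mem_left _ _ (diff01_mem a sij)
    have h2 : X 0 ^ k * hpart a sij 1 ∈ Ideal.span (Sgen a sij) :=
      X_pow_mul_hpart_ne_mem a sij ha (by decide) hk
    have heq : X 0 ^ k * hpart a sij 0
        = X 0 ^ k * (hpart a sij 0 - hpart a sij 1) + X 0 ^ k * hpart a sij 1 := by ring
    exact heq ▸ Ideal.add_mem _ h1 h2
  · have h1 : X 1 ^ k * (hpart a sij 1 - hpart a sij 2) ∈ Ideal.span (Sgen a sij) :=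
      Ideal.mul_mem_left _ _ (diff12_mem a sij)
    have h2 : X 1 ^ k * hpart a sij 2 ∈ Ideal.span (Sgen a sij) :=
      X_pow_mul_hpart_ne_mem a sij ha (by decide) hk
    have heq : X 1 ^ k * hpart a sij 1
        = X 1 ^ k * (hpart a sij 1 - hpart a sij 2) + X 1 ^ k * hpart a sij 2 := by ring
    exact heq ▸ Ideal.add_mem _ h1 h2
  · have h1 : X 2 ^ k * (hpart a sij 1 - hpart a sij 2) ∈ Ideal.span (Sgen a sij) :=
      Ideal.mul_mem_left _ _ (diff12_mem a sij)
    have h2 : X 2 ^ k * hpart a sij 1 ∈ Ideal.span (Sgen a sij) :=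
      X_pow_mul_hpart_ne_mem a sij ha (by decide) hk
    have heq : X 2 ^ k * hpart a sij 2
        = X 2 ^ k * hpart a sij 1 - X 2 ^ k * (hpart a sij 1 - hpart a sij 2) := by ring
    exact heq ▸ Ideal.sub_mem _ h2 h1

lemma mkq_eq_of_sub_mem {p q : MvPolynomial (Fin 3) ℂ}
    (h : p - q ∈ Ideal.span (Sgen a sij)) :
    Ideal.Quotient.mkₐ ℂ (Ideal.span (Sgen a sij)) p
      = Ideal.Quotient.mkₐ ℂ (Ideal.span (Sgen a sij)) q := by
  rw [Ideal.Quotient.mkₐ_eq_mk]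
  exact Ideal.Quotient.eq.mpr h

lemma mkq_eq_zero_of_mem {p : MvPolynomial (Fin 3) ℂ}
    (h : p ∈ Ideal.span (Sgen a sij)) :
    Ideal.Quotient.mkₐ ℂ (Ideal.span (Sgen a sij)) p = 0 := by
  rw [Ideal.Quotient.mkₐ_eq_mk]
  exact Ideal.Quotient.eq_zero_iff_mem.mpr h

lemma hrel (i : Fin 3) :
    Ideal.Quotient.mkₐ ℂ (Ideal.span (Sgen a sij)) (hpart a sij i)
      = Ideal.Quotient.mkₐ ℂ (Ideal.span (Sgen a sij)) (hpart a sij 1) := by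
  fin_cases i
  · exact mkq_eq_of_sub_mem a sij (diff01_mem a sij)
  · rfl
  · refine mkq_eq_of_sub_mem a sij ?_
    have h := Submodule.neg_mem _ (diff12_mem a sij)
    rwa [neg_sub] at h

lemma X_pow_hpart_expand (i : Fin 3) {n : ℕ} (hn : a i ≤ n) :
    X i ^ (n - a i) * hpart a sij i
      = (a i : ℂ) • (X i ^ n)
        + ∑ j ∈ Finset.Ico 1 (a i), ((j : ℂ) * sij i j) • X i ^ (n - a i + j) := by
  rw [hpart, mul_add, Finset.mul_sum]
  congr 1
  · rw [smul_eq_C_mul, map_natCast (C : ℂ →+* MvPolynomial (Fin 3) ℂ),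
      show n = (n - a i) + a i by omega]
    rw [pow_add, show n - a i + a i - a i = n - a i by omega]
    ring
  · refine Finset.sum_congr rfl fun j _ => ?_
    rw [smul_eq_C_mul, map_mul, map_natCast (C : ℂ →+* MvPolynomial (Fin 3) ℂ), pow_add]
    ring

lemma pow_mem_span (ha : ∀ i, 0 < a i) (i : Fin 3) (n : ℕ) :
    (Ideal.Quotient.mkₐ ℂ (Ideal.span (Sgen a sij))) (X i ^ n)
      ∈ Submodule.span ℂ (Set.range (vq a sij)) := by
  induction n using Nat.strong_induction_on with
  | _ n IH =>
  by_cases h0 : n = 0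
  · subst h0
    rw [pow_zero]
    exact Submodule.subset_span ⟨none, rfl⟩
  by_cases hlt : n < a i
  · refine Submodule.subset_span ⟨some (some ⟨i, ⟨n - 1, by omega⟩⟩), ?_⟩
    show (Ideal.Quotient.mkₐ ℂ (Ideal.span (Sgen a sij))) (X i ^ ((n - 1) + 1)) = _
    rw [Nat.sub_add_cancel (by omega : 1 ≤ n)]
  · have han : a i ≤ n := le_of_not_gt hlt
    have hA : ((a i : ℂ)) ≠ 0 := Nat.cast_ne_zero.mpr (ha i).ne'
    set V := Submodule.span ℂ (Set.range (vq a sij)) with hV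
    set mk' := Ideal.Quotient.mkₐ ℂ (Ideal.span (Sgen a sij)) with hmk
    have hq := congrArg mk' (X_pow_hpart_expand a sij i han)
    rw [map_add, map_smul, map_sum] at hq
    simp only [map_smul] at hq
    have hsum : (∑ j ∈ Finset.Ico 1 (a i), ((j : ℂ) * sij i j) • mk' (X i ^ (n - a i + j))) ∈ V := by
      refine Submodule.sum_mem _ fun j hj => Submodule.smul_mem _ _ ?_
      have := Finset.mem_Ico.mp hj
      exact IH _ (by omega)
    have hfirst : mk' (X i ^ (n - a i) * hpart a sij i) ∈ V := by
      rcases eq_or_lt_of_le han with heq | hlt'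
      · rw [show n - a i = 0 by omega, pow_zero, one_mul, hrel a sij i]
        exact Submodule.subset_span ⟨some none, rfl⟩
      · have hmem : X i ^ (n - a i) * hpart a sij i ∈ Ideal.span (Sgen a sij) :=
          X_pow_mul_hpart_self_mem a sij ha i (by omega)
        rw [hmk, mkq_eq_zero_of_mem a sij hmem]
        exact Submodule.zero_mem _
    have h2 : (a i : ℂ) • mk' (X i ^ n) ∈ V := by
      have h3 := Submodule.sub_mem V (hq ▸ hfirst) hsum
      simpa using h3
    have h4 := Submodule.smul_mem V ((a i : ℂ)⁻¹) h2
    rwa [inv_smul_smul₀ hA] at h4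

lemma fin3_classify (m : Fin 3 →₀ ℕ) :
    (∃ i, m = Finsupp.single i (m i)) ∨ (∃ i j, i ≠ j ∧ m i ≠ 0 ∧ m j ≠ 0) := by
  classical
  have hcase : ∀ k : Fin 3, k = 0 ∨ k = 1 ∨ k = 2 := by decide
  by_cases h0 : m 0 = 0 <;> by_cases h1 : m 1 = 0 <;> by_cases h2 : m 2 = 0
  · left; exact ⟨0, by ext k; rcases hcase k with rfl | rfl | rfl <;>
      simp [Finsupp.single_apply, h0, h1, h2]⟩
  · left; exact ⟨2, by ext k; rcases hcase k with rfl | rfl | rfl <;>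
      simp [Finsupp.single_apply, h0, h1, h2]⟩
  · left; exact ⟨1, by ext k; rcases hcase k with rfl | rfl | rfl <;>
      simp [Finsupp.single_apply, h0, h1, h2]⟩
  · right; exact ⟨1, 2, by decide, h1, h2⟩
  · left; exact ⟨0, by ext k; rcases hcase k with rfl | rfl | rfl <;>
      simp [Finsupp.single_apply, h0, h1, h2]⟩
  · right; exact ⟨0, 2, by decide, h0, h2⟩
  · right; exact ⟨0, 1, by decide, h0, h1⟩
  · right; exact ⟨0, 1, by decide, h0, h1⟩

lemma mono_mem_span (ha : ∀ i, 0 < a i) (m : Fin 3 →₀ ℕ) :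
    (Ideal.Quotient.mkₐ ℂ (Ideal.span (Sgen a sij))) (monomial m 1)
      ∈ Submodule.span ℂ (Set.range (vq a sij)) := by
  rcases fin3_classify m with ⟨i, hi⟩ | ⟨i, j, hij, hi, hj⟩
  · rw [hi, ← X_pow_eq_monomial]
    exact pow_mem_span a sij ha i (m i)
  · have hmem := mono_mixed_mem a sij hij hi hj
    rw [mkq_eq_zero_of_mem a sij hmem]
    exact Submodule.zero_mem _

lemma top_le_span (ha : ∀ i, 0 < a i) :
    ⊤ ≤ Submodule.span ℂ (Set.range (vq a sij)) := by
  rintro q -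
  obtain ⟨p, rfl⟩ := Ideal.Quotient.mkₐ_surjective ℂ (Ideal.span (Sgen a sij)) q
  induction p using MvPolynomial.induction_on' with
  | monomial m r =>
    have hm : (monomial m r : MvPolynomial (Fin 3) ℂ) = r • monomial m 1 := by
      simp [smul_monomial]
    rw [hm, map_smul]
    exact Submodule.smul_mem _ _ (mono_mem_span a sij ha m)
  | add p q hp hq =>
    rw [map_add]
    exact Submodule.add_mem _ hp hq

end Quot

/-! ### Linear independence -/

section Indep

variable (a : Fin 3 → ℕ) (sij : Fin 3 → ℕ → ℂ)

lemma Lmap_one (w : (Fin 3 →₀ ℕ) → ℂ) : Lmap w 1 = w 0 := by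
  have h1 : (1 : MvPolynomial (Fin 3) ℂ) = monomial 0 1 := by
    rw [monomial_zero', C_1]
  rw [h1, Lmap_monomial, one_mul]

lemma Lmap_hpart (ha : ∀ i, 0 < a i) (d : Fin 3 → ℕ → ℂ) (γ e : ℂ) (i : Fin 3) :
    Lmap (wt (fun i' => cseq (a i') (sij i') (d i') γ) e) (hpart a sij i) = γ := by
  have h1 : hpart a sij i = monomial 0 1 * hpart a sij i := by
    rw [monomial_zero', C_1, one_mul]
  rw [h1, Lmap_mono_hpart a sij ha d γ e 0 i, if_pos rfl]

lemma vq_indep (ha : ∀ i, 0 < a i) : LinearIndependent ℂ (vq a sij) := by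
  rw [Fintype.linearIndependent_iff]
  intro g hg
  have hP : (∑ x, g x • pre a sij x) ∈ Ideal.span (Sgen a sij) := by
    rw [← Ideal.Quotient.eq_zero_iff_mem]
    have h2 : (Ideal.Quotient.mkₐ ℂ (Ideal.span (Sgen a sij))) (∑ x, g x • pre a sij x) = 0 := by
      rw [map_sum]
      simp only [map_smul]
      exact hg
    rw [Ideal.Quotient.mkₐ_eq_mk] at h2
    exact h2
  have hval : ∀ (d : Fin 3 → ℕ → ℂ) (γ e : ℂ),
      g none * e + (g (some none) * γ
        + ∑ i : Fin 3, ∑ j : Fin (a i - 1),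
            g (some (some ⟨i, j⟩)) * d i ((j : ℕ) + 1)) = 0 := by
    intro d γ e
    set w := wt (fun i' => cseq (a i') (sij i') (d i') γ) e with hw
    have h0 := Lmap_ann w _ (Lmap_gen_zero a sij ha d γ e) hP
    rw [map_sum] at h0
    simp only [map_smul, smul_eq_mul] at h0
    rw [Fintype.sum_option, Fintype.sum_option] at h0
    rw [← Finset.univ_sigma_univ, Finset.sum_sigma] at h0
    rw [show Lmap w (pre a sij none) = e from by rw [pre, Lmap_one]; exact wt_zero _ _] at h0
    rw [show Lmap w (pre a sij (some none)) = γ from Lmap_hpart a sij ha d γ e 1] at h0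
    rw [Finset.sum_congr rfl (fun i _ => Finset.sum_congr rfl (fun j _ => by
      rw [show Lmap w (pre a sij (some (some ⟨i, j⟩))) = d i ((j : ℕ) + 1) from by
        rw [pre, X_pow_eq_monomial, Lmap_monomial, one_mul, hw, wt_single _ _ _ (by omega : ((j:ℕ)+1) ≠ 0)]
        exact cseq_lt (by omega)]))] at h0
    exact h0
  intro x
  match x with
  | none =>
    have h := hval (fun _ _ => 0) 0 1
    simpa using h
  | some none =>
    have h := hval (fun _ _ => 0) 1 0
    simpa using h
  | some (some ⟨i₀, j₀⟩) =>
    have h := hval (fun i n => if i = i₀ ∧ n = (j₀ : ℕ) + 1 then 1 else 0) 0 0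
    rw [mul_zero, mul_zero, zero_add, zero_add] at h
    rw [Finset.sum_eq_single i₀ (fun i _ hi => Finset.sum_eq_zero fun j _ => by
      rw [if_neg (fun hc => hi hc.1), mul_zero])
      (fun hni => absurd (Finset.mem_univ _) hni)] at h
    rw [Finset.sum_eq_single j₀ (fun j _ hj => by
      rw [if_neg (fun hc => hj (Fin.ext (by omega : (j : ℕ) = (j₀ : ℕ)))), mul_zero])
      (fun hnj => absurd (Finset.mem_univ _) hnj)] at h
    rw [if_pos ⟨rfl, rfl⟩, mul_one] at h
    exact h

end Indep

/-! ### Putting it together -/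

theorem key_finrank (a : Fin 3 → ℕ) (ha : ∀ i, 0 < a i) (sij : Fin 3 → ℕ → ℂ) :
    FiniteDimensional ℂ (MvPolynomial (Fin 3) ℂ ⧸ Ideal.span (Sgen a sij)) ∧
      Module.finrank ℂ (MvPolynomial (Fin 3) ℂ ⧸ Ideal.span (Sgen a sij))
        = a 0 + a 1 + a 2 - 1 := by
  have b : Module.Basis (bIdx a) ℂ (MvPolynomial (Fin 3) ℂ ⧸ Ideal.span (Sgen a sij)) :=
    Module.Basis.mk (vq_indep a sij ha) (top_le_span a sij ha)
  have hfd : FiniteDimensional ℂ (MvPolynomial (Fin 3) ℂ ⧸ Ideal.span (Sgen a sij)) :=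
    Module.Basis.finiteDimensional_of_finite b
  refine ⟨hfd, ?_⟩
  rw [Module.finrank_eq_card_basis b]
  have hc : Fintype.card (bIdx a) = 2 + ((a 0 - 1) + ((a 1 - 1) + (a 2 - 1))) := by
    simp [bIdx, Fintype.card_option, Fintype.card_sigma, Fin.sum_univ_three]
    ring
  rw [hc]
  have h0 := ha 0; have h1 := ha 1; have h2 := ha 2
  omega

/-- For every choice of the parameters `s_{i,j}`, the algebra
`ℂ[x₁,x₂,x₃]/(x₂x₃, x₃x₁, x₁x₂, H₁(x,s), H₂(x,s))` has dimension `μ_A = a₁+a₂+a₃−1` over `ℂ`;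
in particular (at `s = 0`) so does
`ℂ[x₁,x₂,x₃]/(x₂x₃, x₃x₁, x₁x₂, a₁x₁^{a₁} − a₂x₂^{a₂}, a₂x₂^{a₂} − a₃x₃^{a₃})`. -/
theorem limit_jacobianRing_finrank
    (a : Fin 3 → ℕ) (ha : ∀ i, 0 < a i)
    (hord : a 0 ≤ a 1 ∧ a 1 ≤ a 2)
    (hχ : 1 < (1 : ℚ) / (a 0) + 1 / (a 1) + 1 / (a 2))
    (sij : Fin 3 → ℕ → ℂ) :
    (FiniteDimensional ℂ
        (MvPolynomial (Fin 3) ℂ ⧸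
          Ideal.span {X 1 * X 2, X 2 * X 0, X 0 * X 1,
            hpart a sij 0 - hpart a sij 1, hpart a sij 1 - hpart a sij 2}) ∧
      Module.finrank ℂ
          (MvPolynomial (Fin 3) ℂ ⧸
            Ideal.span {X 1 * X 2, X 2 * X 0, X 0 * X 1,
              hpart a sij 0 - hpart a sij 1, hpart a sij 1 - hpart a sij 2}) =
        a 0 + a 1 + a 2 - 1) ∧
    (FiniteDimensional ℂ
        (MvPolynomial (Fin 3) ℂ ⧸
          Ideal.span {(X 1 * X 2 : MvPolynomial (Fin 3) ℂ), X 2 * X 0, X 0 * X 1,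
            (a 0 : MvPolynomial (Fin 3) ℂ) * X 0 ^ a 0
              - (a 1 : MvPolynomial (Fin 3) ℂ) * X 1 ^ a 1,
            (a 1 : MvPolynomial (Fin 3) ℂ) * X 1 ^ a 1
              - (a 2 : MvPolynomial (Fin 3) ℂ) * X 2 ^ a 2}) ∧
      Module.finrank ℂ
          (MvPolynomial (Fin 3) ℂ ⧸
            Ideal.span {(X 1 * X 2 : MvPolynomial (Fin 3) ℂ), X 2 * X 0, X 0 * X 1,
              (a 0 : MvPolynomial (Fin 3) ℂ) * X 0 ^ a 0
                - (a 1 : MvPolynomial (Fin 3) ℂ) * X 1 ^ a 1,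
              (a 1 : MvPolynomial (Fin 3) ℂ) * X 1 ^ a 1
                - (a 2 : MvPolynomial (Fin 3) ℂ) * X 2 ^ a 2}) =
        a 0 + a 1 + a 2 - 1) := by
  constructor
  · exact key_finrank a ha sij
  · have h2 := key_finrank a ha (fun _ _ => 0)
    have hzero : ∀ i, hpart a (fun _ _ => 0) i
        = (a i : MvPolynomial (Fin 3) ℂ) * X i ^ a i := by
      intro i
      simp [hpart]
    rw [Sgen, hzero, hzero, hzero] at h2
    exact h2
end
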